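/- arXiv:1107.1947 — 6 statements merged into one kernel-verified Lean document; each statement's English description precedes it below -/
import Mathlib

section
/- For all u, v ∈ ℝ⁷ ≅ Im ℍ × ℍ, the octonionic cross product satisfies ‖u × v‖² = ‖u‖² ‖v‖² − ⟨u, v⟩²; that is, the length of u × v equals the area of the parallelogram spanned by u and v (property (ii) of a 2-fold vector cross product). -/
noncomputable section

/-- The Euclidean inner product on `ℝ⁷ ≅ Im ℍ × ℍ`:
`⟨(a,b),(c,d)⟩ = Re(a c*) + Re(b d*)`. -/
def oinner (x y : Quaternion ℝ × Quaternion ℝ) : ℝ :=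
  (x.1 * star y.1).re + (x.2 * star y.2).re

/-- The induced Euclidean norm. -/
def onorm (x : Quaternion ℝ × Quaternion ℝ) : ℝ :=
  Real.sqrt (oinner x x)

/-- The octonionic cross product on `ℝ⁷ ≅ Im ℍ × ℍ` (Cayley–Dickson):
`(a,b) × (c,d) = (Im(a c − d* b), d a + b c*)`. -/
def ocross (x y : Quaternion ℝ × Quaternion ℝ) : Quaternion ℝ × Quaternion ℝ :=
  ((x.1 * y.1 - star y.2 * x.2).im, y.2 * x.1 + x.2 * star y.1)

lemma oinner_self_nonneg (x : Quaternion ℝ × Quaternion ℝ) : 0 ≤ oinner x x := by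
  simp only [oinner, Quaternion.re_mul, Quaternion.re_star, Quaternion.imI_star,
    Quaternion.imJ_star, Quaternion.imK_star]
  nlinarith [sq_nonneg x.1.re, sq_nonneg x.1.imI, sq_nonneg x.1.imJ, sq_nonneg x.1.imK,
    sq_nonneg x.2.re, sq_nonneg x.2.imI, sq_nonneg x.2.imJ, sq_nonneg x.2.imK]

lemma sq_onorm (x : Quaternion ℝ × Quaternion ℝ) : onorm x ^ 2 = oinner x x :=
  Real.sq_sqrt (oinner_self_nonneg x)

/-- `‖u × v‖² = ‖u‖² ‖v‖² − ⟨u, v⟩²`, i.e. the length of `u × v`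
equals the area of the parallelogram spanned by `u` and `v`. -/
theorem ocross_norm_sq
    (u v : Quaternion ℝ × Quaternion ℝ) (hu : u.1.re = 0) (hv : v.1.re = 0) :
    onorm (ocross u v) ^ 2 = onorm u ^ 2 * onorm v ^ 2 - oinner u v ^ 2 := by
  simp only [sq_onorm, oinner, ocross]
  simp only [Quaternion.re_mul, Quaternion.imI_mul, Quaternion.imJ_mul, Quaternion.imK_mul,
    Quaternion.re_star, Quaternion.imI_star, Quaternion.imJ_star, Quaternion.imK_star,
    Quaternion.re_add, Quaternion.imI_add, Quaternion.imJ_add, Quaternion.imK_add,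
    Quaternion.re_sub, Quaternion.imI_sub, Quaternion.imJ_sub, Quaternion.imK_sub,
    Quaternion.re_im, Quaternion.imI_im, Quaternion.imJ_im, Quaternion.imK_im,
    hu, hv]
  ring
end
end

section
/- The 4-linear form on ℝ⁷ ≅ Im ℍ × ℍ given by (u,v,w,z) ↦ ⟨τ(u,v,w), z⟩, where τ(u,v,w) = −u × (v × w) − ⟨u,v⟩ w + ⟨u,w⟩ v, is alternating: it vanishes whenever two of its four arguments are equal. In particular τ itself is an alternating vector-valued 3-form (this 4-form is (∗Ω)(u,v,w,z) = ⟨τ(u,v,w), z⟩). -/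
noncomputable section

/-- The vector-valued 3-form `τ(u,v,w) = −u × (v × w) − ⟨u,v⟩ w + ⟨u,w⟩ v`. -/
def tau (u v w : Quaternion ℝ × Quaternion ℝ) : Quaternion ℝ × Quaternion ℝ :=
  - ocross u (ocross v w) - oinner u v • w + oinner u w • v

/-- The 4-linear form `(∗Ω)(u,v,w,z) = ⟨τ(u,v,w), z⟩`. -/
def coassocForm (u v w z : Quaternion ℝ × Quaternion ℝ) : ℝ :=
  oinner (tau u v w) z

/-- the 4-linear form `(u,v,w,z) ↦ ⟨τ(u,v,w), z⟩` on
`ℝ⁷ ≅ Im ℍ × ℍ` is alternating: it vanishes whenever two of its four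
arguments are equal. -/
theorem coassocForm_alternating
    (u v w z : Quaternion ℝ × Quaternion ℝ)
    (hu : u.1.re = 0) (hv : v.1.re = 0) (hw : w.1.re = 0) (hz : z.1.re = 0) :
    coassocForm u u w z = 0 ∧
    coassocForm u v u z = 0 ∧
    coassocForm u v w u = 0 ∧
    coassocForm u v v z = 0 ∧
    coassocForm u v w v = 0 ∧
    coassocForm u v w w = 0 := by
  set_option maxHeartbeats 1000000 in
  refine ⟨?_, ?_, ?_, ?_, ?_, ?_⟩ <;>
  · simp only [coassocForm, tau, ocross, oinner, Quaternion.re_mul, Quaternion.imI_mul,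
      Quaternion.imJ_mul, Quaternion.imK_mul, Quaternion.re_star, Quaternion.imI_star,
      Quaternion.imJ_star, Quaternion.imK_star, Quaternion.re_sub, Quaternion.imI_sub,
      Quaternion.imJ_sub, Quaternion.imK_sub, Quaternion.re_add, Quaternion.imI_add,
      Quaternion.imJ_add, Quaternion.imK_add, Quaternion.re_neg, Quaternion.imI_neg,
      Quaternion.imJ_neg, Quaternion.imK_neg, Quaternion.re_smul, Quaternion.imI_smul,
      Quaternion.imJ_smul, Quaternion.imK_smul, Quaternion.re_im, Quaternion.imI_im,
      Quaternion.imJ_im, Quaternion.imK_im, Prod.fst_sub, Prod.snd_sub, Prod.fst_add,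
      Prod.snd_add, Prod.fst_neg, Prod.snd_neg, Prod.smul_fst, Prod.smul_snd,
      smul_eq_mul, hu, hv, hw, hz]
    ring
end
end

section
/- For all u, w ∈ ℝ⁷ ≅ Im ℍ × ℍ one has u × (u × w) = −‖u‖² w + ⟨u,w⟩ u for the octonionic cross product. In particular, if ‖u‖ = 1 and ⟨u,w⟩ = 0 then u × (u × w) = −w. -/
noncomputable section

set_option maxHeartbeats 1000000 in
/-- `u × (u × w) = −‖u‖² w + ⟨u,w⟩ u`; in particular, if `‖u‖ = 1`
and `⟨u,w⟩ = 0` then `u × (u × w) = −w`. -/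
theorem ocross_ocross_self
    (u w : Quaternion ℝ × Quaternion ℝ) (hu : u.1.re = 0) (hw : w.1.re = 0) :
    ocross u (ocross u w) = (-(onorm u ^ 2)) • w + oinner u w • u ∧
    (onorm u = 1 → oinner u w = 0 → ocross u (ocross u w) = -w) := by
  have hnn : 0 ≤ oinner u u := by
    simp only [oinner, Quaternion.self_mul_star, Quaternion.re_coe]
    exact add_nonneg Quaternion.normSq_nonneg Quaternion.normSq_nonneg
  have hsq : onorm u ^ 2 = oinner u u := Real.sq_sqrt hnn
  have key : ocross u (ocross u w) = (-(oinner u u)) • w + oinner u w • u := by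
    obtain ⟨a, b⟩ := u
    obtain ⟨c, d⟩ := w
    simp only at hu hw
    refine Prod.ext ?_ ?_ <;> apply Quaternion.ext <;>
      simp only [ocross, oinner, Prod.fst_add, Prod.snd_add, Prod.smul_fst, Prod.smul_snd,
        Quaternion.re_add, Quaternion.imI_add, Quaternion.imJ_add, Quaternion.imK_add,
        Quaternion.re_smul, Quaternion.imI_smul, Quaternion.imJ_smul, Quaternion.imK_smul,
        Quaternion.re_mul, Quaternion.imI_mul, Quaternion.imJ_mul, Quaternion.imK_mul,
        Quaternion.re_sub, Quaternion.imI_sub, Quaternion.imJ_sub, Quaternion.imK_sub,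
        Quaternion.re_star, Quaternion.imI_star, Quaternion.imJ_star, Quaternion.imK_star,
        Quaternion.re_im, Quaternion.imI_im, Quaternion.imJ_im, Quaternion.imK_im,
        smul_eq_mul, hu, hw] <;> ring
  refine ⟨by rw [hsq]; exact key, fun h1 h2 => ?_⟩
  rw [key, h2, ← hsq, h1]
  simp
end
end

section
/- For all u, v, w ∈ ℝ⁷ ≅ Im ℍ × ℍ the octonionic cross product satisfies the Clifford-type anticommutation identity u × (v × w) + v × (u × w) = −2⟨u,v⟩ w + ⟨u,w⟩ v + ⟨v,w⟩ u. -/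
noncomputable section
set_option maxHeartbeats 4000000

/-- the Clifford-type anticommutation identity
`u × (v × w) + v × (u × w) = −2⟨u,v⟩ w + ⟨u,w⟩ v + ⟨v,w⟩ u`. -/
theorem ocross_clifford_anticommutation
    (u v w : Quaternion ℝ × Quaternion ℝ)
    (hu : u.1.re = 0) (hv : v.1.re = 0) (hw : w.1.re = 0) :
    ocross u (ocross v w) + ocross v (ocross u w) =
      (-2 * oinner u v) • w + oinner u w • v + oinner v w • u := by
  obtain ⟨a, b⟩ := u; obtain ⟨c, d⟩ := v; obtain ⟨e, f⟩ := w
  simp only at hu hv hw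
  refine Prod.ext ?_ ?_ <;>
  · apply Quaternion.ext <;>
    simp only [ocross, oinner, Prod.fst_add, Prod.snd_add, Prod.smul_fst, Prod.smul_snd,
      Quaternion.re_mul, Quaternion.imI_mul, Quaternion.imJ_mul, Quaternion.imK_mul,
      Quaternion.re_add, Quaternion.imI_add, Quaternion.imJ_add, Quaternion.imK_add,
      Quaternion.re_sub, Quaternion.imI_sub, Quaternion.imJ_sub, Quaternion.imK_sub,
      Quaternion.re_im, Quaternion.imI_im, Quaternion.imJ_im, Quaternion.imK_im,
      Quaternion.re_smul, Quaternion.imI_smul, Quaternion.imJ_smul, Quaternion.imK_smul,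
      Quaternion.re_star, Quaternion.imI_star, Quaternion.imJ_star, Quaternion.imK_star,
      smul_eq_mul, hu, hv, hw] <;> ring
end
end

section
/- Let C ⊂ ℝ⁷ ≅ Im ℍ × ℍ be a 4-dimensional linear subspace that is coassociative, i.e. Ω(u,v,w) = 0 for all u, v, w ∈ C, and let n be a unit vector orthogonal to C. Then the map J_n(u) = n × u sends C into C and is a Hermitian complex structure on C: J_n(J_n(u)) = −u and ‖J_n(u)‖ = ‖u‖ for every u ∈ C. -/
noncomputable section

namespace CoassocAux

open Quaternion Module Submodule

set_option maxHeartbeats 2000000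

lemma ocross_antisymm (x y : Quaternion ℝ × Quaternion ℝ) (hx : x.1.re = 0) (hy : y.1.re = 0) :
    ocross x y = - ocross y x := by
  obtain ⟨a, b⟩ := x; obtain ⟨c, d⟩ := y
  simp only at hx hy
  refine Prod.ext (Quaternion.ext _ _ ?_ ?_ ?_ ?_) (Quaternion.ext _ _ ?_ ?_ ?_ ?_) <;>
    simp [ocross, Quaternion.re_mul, Quaternion.imI_mul, Quaternion.imJ_mul, Quaternion.imK_mul,
      hx, hy] <;> ring

lemma ocross_double (u x : Quaternion ℝ × Quaternion ℝ) (hu : u.1.re = 0) (hx : x.1.re = 0) :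
    ocross u (ocross u x) = oinner u x • u - oinner u u • x := by
  obtain ⟨a, b⟩ := u; obtain ⟨c, d⟩ := x
  simp only at hu hx
  refine Prod.ext (Quaternion.ext _ _ ?_ ?_ ?_ ?_) (Quaternion.ext _ _ ?_ ?_ ?_ ?_) <;>
    simp only [ocross, oinner, Prod.fst, Prod.snd, Prod.smul_fst, Prod.smul_snd, Prod.fst_sub,
      Prod.snd_sub, Quaternion.re_mul, Quaternion.imI_mul, Quaternion.imJ_mul,
      Quaternion.imK_mul, Quaternion.re_star, Quaternion.imI_star, Quaternion.imJ_star,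
      Quaternion.imK_star, Quaternion.re_sub, Quaternion.imI_sub, Quaternion.imJ_sub,
      Quaternion.imK_sub, Quaternion.re_add, Quaternion.imI_add, Quaternion.imJ_add,
      Quaternion.imK_add, Quaternion.re_im, Quaternion.imI_im, Quaternion.imJ_im,
      Quaternion.imK_im, Quaternion.re_smul, Quaternion.imI_smul, Quaternion.imJ_smul,
      Quaternion.imK_smul, smul_eq_mul, hu, hx] <;> ring

lemma oinner_ocross_self (u x : Quaternion ℝ × Quaternion ℝ) (hu : u.1.re = 0)
    (hx : x.1.re = 0) :
    oinner (ocross u x) (ocross u x) = oinner u u * oinner x x - (oinner u x)^2 := by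
  obtain ⟨a, b⟩ := u; obtain ⟨c, d⟩ := x
  simp only at hu hx
  simp [ocross, oinner, Quaternion.re_mul, Quaternion.imI_mul, Quaternion.imJ_mul,
      Quaternion.imK_mul, hu, hx]
  ring

lemma oinner_comm (x y : Quaternion ℝ × Quaternion ℝ) : oinner x y = oinner y x := by
  simp [oinner, Quaternion.re_mul]; ring

lemma ocross_add (u x y : Quaternion ℝ × Quaternion ℝ) :
    ocross u (x + y) = ocross u x + ocross u y := by
  refine Prod.ext (Quaternion.ext _ _ ?_ ?_ ?_ ?_) (Quaternion.ext _ _ ?_ ?_ ?_ ?_) <;>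
    simp only [ocross, Prod.fst_add, Prod.snd_add, Quaternion.re_mul, Quaternion.imI_mul,
      Quaternion.imJ_mul, Quaternion.imK_mul, Quaternion.re_star, Quaternion.imI_star,
      Quaternion.imJ_star, Quaternion.imK_star, Quaternion.re_sub, Quaternion.imI_sub,
      Quaternion.imJ_sub, Quaternion.imK_sub, Quaternion.re_add, Quaternion.imI_add,
      Quaternion.imJ_add, Quaternion.imK_add, Quaternion.re_im, Quaternion.imI_im,
      Quaternion.imJ_im, Quaternion.imK_im] <;> ring

lemma ocross_smul (u : Quaternion ℝ × Quaternion ℝ) (r : ℝ) (x : Quaternion ℝ × Quaternion ℝ) :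
    ocross u (r • x) = r • ocross u x := by
  simp only [ocross, Prod.smul_fst, Prod.smul_snd, Quaternion.star_smul, smul_mul_assoc,
    mul_smul_comm, ← smul_sub, ← smul_add, Quaternion.im_smul, Prod.smul_mk]

lemma ocross_fst_re (x y : Quaternion ℝ × Quaternion ℝ) : (ocross x y).1.re = 0 :=
  Quaternion.re_im _

/-- `ℝ⁸` as an inner product space. -/
abbrev E8 := WithLp 2 (Quaternion ℝ × Quaternion ℝ)

def toE : (Quaternion ℝ × Quaternion ℝ) ≃ₗ[ℝ] E8 := (WithLp.linearEquiv 2 ℝ _).symm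

lemma inner_eq_oinner (x y : E8) : (inner ℝ x y : ℝ) = oinner (toE.symm x) (toE.symm y) := rfl

lemma finrank_E8 : Module.finrank ℝ E8 = 8 := by
  rw [toE.symm.finrank_eq, Module.finrank_prod, Quaternion.finrank_eq_four]

/-- `ocross u ·` as a linear map. -/
def ocrossL (u : Quaternion ℝ × Quaternion ℝ) :
    (Quaternion ℝ × Quaternion ℝ) →ₗ[ℝ] (Quaternion ℝ × Quaternion ℝ) where
  toFun := ocross u
  map_add' := ocross_add u
  map_smul' := ocross_smul u

/-- The real part of the first component, as a linear functional on `E8`. -/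
def reL : E8 →ₗ[ℝ] ℝ where
  toFun x := (toE.symm x).1.re
  map_add' x y := by simp
  map_smul' r x := by simp

end CoassocAux

set_option maxHeartbeats 2000000 in
open CoassocAux Quaternion Module Submodule in
/-- if `C` is a coassociative 4-plane in `ℝ⁷ ≅ Im ℍ × ℍ` and `n`
is a unit normal to `C`, then `J_n(u) = n × u` sends `C` into `C` and is a
Hermitian complex structure on `C`. -/
theorem coassociative_Jn_complex_structure
    (C : Submodule ℝ (Quaternion ℝ × Quaternion ℝ))
    (hC : ∀ x ∈ C, x.1.re = 0)
    (hdim : Module.finrank ℝ C = 4)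
    (hcoassoc : ∀ u ∈ C, ∀ v ∈ C, ∀ w ∈ C, oinner (ocross u v) w = 0)
    (n : Quaternion ℝ × Quaternion ℝ) (hn : n.1.re = 0) (hnorm : onorm n = 1)
    (hperp : ∀ x ∈ C, oinner n x = 0) :
    ∀ u ∈ C,
      ocross n u ∈ C ∧
      ocross n (ocross n u) = -u ∧
      onorm (ocross n u) = onorm u := by
  classical
  intro u hu
  have hu1 : u.1.re = 0 := hC u hu
  have hnn : oinner n n = 1 := Real.sqrt_eq_one.mp hnorm
  have hnu : oinner n u = 0 := hperp u hu
  refine ⟨?_, ?_, ?_⟩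
  · -- membership
    by_cases hu0 : u = 0
    · have : ocross n u = 0 := by
        subst hu0
        refine Prod.ext ?_ ?_ <;> simp [ocross]
      rw [this]; exact C.zero_mem
    -- setup in the inner product space E8
    set C' : Submodule ℝ E8 := C.map toE.toLinearMap with hC'def
    have hmemC' : ∀ x : E8, x ∈ C' ↔ toE.symm x ∈ C := fun x =>
      Submodule.mem_map_equiv (p := C) (e := toE) (x := x)
    have hC'dim : finrank ℝ C' = 4 := by
      rw [hC'def, LinearEquiv.finrank_map_eq]; exact hdim
    set V' : Submodule ℝ E8 := LinearMap.ker reL with hV'def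
    have hmemV' : ∀ x : E8, x ∈ V' ↔ (toE.symm x).1.re = 0 := fun x => Iff.rfl
    have hV'dim : finrank ℝ V' = 7 := by
      have hr : LinearMap.range reL = ⊤ := by
        rw [LinearMap.range_eq_top]
        intro r
        refine ⟨toE ((Quaternion.coe r : Quaternion ℝ), 0), ?_⟩
        show (toE.symm (toE _)).1.re = r
        simp
      have := LinearMap.finrank_range_add_finrank_ker reL
      rw [hr, finrank_top, finrank_E8, finrank_self] at this
      rw [hV'def]
      omega
    have hCV' : C' ≤ V' := by
      intro x hx
      rw [hmemV']
      exact hC _ ((hmemC' x).mp hx)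
    -- the normal space N
    set N : Submodule ℝ E8 := C'ᗮ ⊓ V' with hNdef
    have hNsup : C' ⊔ (C'ᗮ ⊓ V') = V' := Submodule.sup_orthogonal_inf_of_hasOrthogonalProjection hCV'
    have hNdisj : C' ⊓ (C'ᗮ ⊓ V') = ⊥ := by
      have h1 : C' ⊓ (C'ᗮ ⊓ V') ≤ C' ⊓ C'ᗮ := inf_le_inf_left _ inf_le_left
      rw [(Submodule.orthogonal_disjoint C').eq_bot] at h1
      exact le_bot_iff.mp h1
    have hNdim : finrank ℝ N = 3 := by
      have hd := Submodule.finrank_sup_add_finrank_inf_eq C' (C'ᗮ ⊓ V')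
      rw [hNsup, hNdisj, hV'dim, hC'dim, finrank_bot, ← hNdef] at hd
      omega
    -- the subspace D = C ∩ u^⊥
    set u' : E8 := toE u with hu'def
    have hu'0 : u' ≠ 0 := by
      simp only [hu'def, ne_eq, EmbeddingLike.map_eq_zero_iff]
      exact hu0
    have huC' : u' ∈ C' := by rw [hmemC', hu'def, LinearEquiv.symm_apply_apply]; exact hu
    have huu : oinner u u ≠ 0 := by
      have h1 : oinner u u = (inner ℝ u' u' : ℝ) := by
        rw [inner_eq_oinner, hu'def, LinearEquiv.symm_apply_apply]
      rw [h1]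
      exact fun h => hu'0 (inner_self_eq_zero.mp h)
    set D : Submodule ℝ E8 := (ℝ ∙ u')ᗮ ⊓ C' with hDdef
    have hspan_le : (ℝ ∙ u') ≤ C' := by rwa [Submodule.span_singleton_le_iff_mem]
    have hDsup : (ℝ ∙ u') ⊔ ((ℝ ∙ u')ᗮ ⊓ C') = C' :=
      Submodule.sup_orthogonal_inf_of_hasOrthogonalProjection hspan_le
    have hDdisj : (ℝ ∙ u') ⊓ ((ℝ ∙ u')ᗮ ⊓ C') = ⊥ := by
      have h1 : (ℝ ∙ u') ⊓ ((ℝ ∙ u')ᗮ ⊓ C') ≤ (ℝ ∙ u') ⊓ (ℝ ∙ u')ᗮ :=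
        inf_le_inf_left _ inf_le_left
      rw [(Submodule.orthogonal_disjoint _).eq_bot] at h1
      exact le_bot_iff.mp h1
    have hDdim : finrank ℝ D = 3 := by
      have hd := Submodule.finrank_sup_add_finrank_inf_eq (ℝ ∙ u') ((ℝ ∙ u')ᗮ ⊓ C')
      rw [hDsup, hDdisj, hC'dim, finrank_bot, finrank_span_singleton hu'0, ← hDdef] at hd
      omega
    -- the map f = ocross u ·, transported to E8
    set f : E8 →ₗ[ℝ] E8 := toE.toLinearMap ∘ₗ ocrossL u ∘ₗ toE.symm.toLinearMap with hfdef
    have hfapp : ∀ x : E8, f x = toE (ocross u (toE.symm x)) := fun x => rfl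
    set g : D →ₗ[ℝ] E8 := f.comp D.subtype with hgdef
    have hkerg : LinearMap.ker g = ⊥ := by
      rw [LinearMap.ker_eq_bot']
      rintro ⟨x, hx⟩ hgx
      have hxC : toE.symm x ∈ C := (hmemC' x).mp hx.2
      have hxperp : oinner u (toE.symm x) = 0 := by
        have h1 : (inner ℝ u' x : ℝ) = 0 :=
          Submodule.mem_orthogonal_singleton_iff_inner_right.mp hx.1
        rw [inner_eq_oinner, hu'def, LinearEquiv.symm_apply_apply] at h1
        exact h1
      have hcr : ocross u (toE.symm x) = 0 := by
        have : toE (ocross u (toE.symm x)) = 0 := hgx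
        simpa using this
      have h2 := oinner_ocross_self u (toE.symm x) hu1 (hC _ hxC)
      rw [hcr, hxperp] at h2
      have h3 : oinner (toE.symm x) (toE.symm x) = 0 := by
        have h0 : oinner (0 : Quaternion ℝ × Quaternion ℝ) 0 = 0 := by simp [oinner]
        rw [h0] at h2
        have h2' : oinner u u * oinner (toE.symm x) (toE.symm x) = 0 := by
          simpa using h2.symm
        rcases mul_eq_zero.mp h2' with h | h
        · exact absurd h huu
        · exact h
      have h4 : (inner ℝ x x : ℝ) = 0 := by rw [inner_eq_oinner]; exact h3
      have h5 : x = 0 := inner_self_eq_zero.mp h4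
      exact Subtype.ext h5
    set M : Submodule ℝ E8 := D.map f with hMdef
    have hrangeg : LinearMap.range g = M := by
      rw [hgdef, LinearMap.range_comp, Submodule.range_subtype]
    have hMdim : finrank ℝ M = 3 := by
      have := LinearMap.finrank_range_add_finrank_ker g
      rw [hkerg, finrank_bot, hrangeg] at this
      omega
    have hMN : M ≤ N := by
      rintro _ ⟨x, hx, rfl⟩
      have hxC : toE.symm x ∈ C := (hmemC' x).mp hx.2
      refine Submodule.mem_inf.mpr ⟨?_, ?_⟩
      · rw [Submodule.mem_orthogonal]
        intro w hw
        rw [inner_eq_oinner]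
        have hsymm : toE.symm (f x) = ocross u (toE.symm x) := by
          rw [hfapp]; simp
        rw [hsymm, oinner_comm]
        exact hcoassoc u hu (toE.symm x) hxC (toE.symm w) ((hmemC' w).mp hw)
      · rw [hmemV']
        have hsymm : toE.symm (f x) = ocross u (toE.symm x) := by
          rw [hfapp]; simp
        rw [hsymm]
        exact ocross_fst_re _ _
    have hMeqN : M = N := Submodule.eq_of_le_of_finrank_le hMN (by rw [hNdim, hMdim])
    -- n lies in N, hence in M
    have hnN : toE n ∈ N := by
      refine Submodule.mem_inf.mpr ⟨?_, ?_⟩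
      · rw [Submodule.mem_orthogonal]
        intro w hw
        rw [inner_eq_oinner]
        simp only [LinearEquiv.symm_apply_apply]
        rw [oinner_comm]
        exact hperp (toE.symm w) ((hmemC' w).mp hw)
      · rw [hmemV']; simpa using hn
    have hnM : toE n ∈ M := hMeqN ▸ hnN
    obtain ⟨x, hx, hfx⟩ := hnM
    have hxC : toE.symm x ∈ C := (hmemC' x).mp hx.2
    have hxperp : oinner u (toE.symm x) = 0 := by
      have h1 : (inner ℝ u' x : ℝ) = 0 :=
        Submodule.mem_orthogonal_singleton_iff_inner_right.mp hx.1
      rw [inner_eq_oinner, hu'def, LinearEquiv.symm_apply_apply] at h1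
      exact h1
    have hcr : ocross u (toE.symm x) = n := by
      have : toE (ocross u (toE.symm x)) = toE n := hfx
      exact toE.injective this
    have hfinal : ocross n u = oinner u u • (toE.symm x) := by
      rw [ocross_antisymm n u hn hu1, ← hcr,
        ocross_double u (toE.symm x) hu1 (hC _ hxC), hxperp]
      simp
    rw [hfinal]
    exact C.smul_mem _ hxC
  · rw [ocross_double n u hn hu1, hnu, hnn]
    simp
  · unfold onorm
    rw [oinner_ocross_self n u hn hu1, hnn, hnu]
    ring_nf
end
end

section
/- (Quantitative implicit function theorem.) Let X and Y be real Banach spaces, r > 0, and let F : X → Y be continuously Fréchet differentiable on the open ball B_r(0) ⊂ X, with derivative DF(x) ∈ L(X, Y) at each x ∈ B_r(0). Assume: (1) DF(0) is invertible with bounded inverse G = (DF(0))⁻¹, and there are constants A, B ≥ 0 with ‖G(F(0))‖ ≤ A and ‖G‖ ≤ B; (2) there is κ ≥ 0 with ‖DF(x) − DF(0)‖ ≤ κ‖x‖ for all x ∈ B_r(0); (3) 2κAB < 1 and 2A < r. Then F has exactly one zero x with ‖x‖ ≤ 2A. -/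
open Metric Set

/-- Half-factor Taylor estimate. -/
lemma half_taylor_aux
    {X Y : Type*}
    [NormedAddCommGroup X] [NormedSpace ℝ X]
    [NormedAddCommGroup Y] [NormedSpace ℝ Y]
    (r κ : ℝ) (hκ : 0 ≤ κ)
    (F : X → Y) (F' : X → X →L[ℝ] Y)
    (hdiff : ∀ x ∈ Metric.ball (0 : X) r, HasFDerivAt F (F' x) x)
    (hlip : ∀ x ∈ Metric.ball (0 : X) r, ‖F' x - F' 0‖ ≤ κ * ‖x‖)
    (x : X) (hx : ‖x‖ < r) :
    ‖F x - F 0 - F' 0 x‖ ≤ κ / 2 * ‖x‖ ^ 2 := by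
  set φ : ℝ → Y := fun t => F (t • x) - t • (F' 0 x) - F 0 with hφ
  have hball : ∀ t ∈ Icc (0:ℝ) 1, t • x ∈ Metric.ball (0 : X) r := by
    intro t ht
    simp only [mem_ball, dist_zero_right, norm_smul, Real.norm_eq_abs]
    calc |t| * ‖x‖ ≤ 1 * ‖x‖ := by
          apply mul_le_mul_of_nonneg_right _ (norm_nonneg x)
          rw [abs_le]; constructor <;> linarith [ht.1, ht.2]
      _ < r := by simpa using hx
  have hderiv : ∀ t ∈ Icc (0:ℝ) 1,
      HasDerivAt φ ((F' (t • x)) x - F' 0 x) t := by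
    intro t ht
    have hc : HasDerivAt (fun s : ℝ => s • x) x t := by
      simpa using (hasDerivAt_id t).smul_const x
    have h1 : HasDerivAt (fun s : ℝ => F (s • x)) ((F' (t • x)) x) t := by
      exact (hdiff (t • x) (hball t ht)).comp_hasDerivAt t hc
    have h2 : HasDerivAt (fun s : ℝ => s • (F' 0 x)) (F' 0 x) t := by
      simpa using (hasDerivAt_id t).smul_const (F' 0 x)
    simpa [hφ] using (h1.sub h2).sub_const (F 0)
  have hcontφ : ContinuousOn φ (Icc 0 1) := fun t ht =>
    (hderiv t ht).continuousAt.continuousWithinAt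
  have key : ∀ t ∈ Icc (0:ℝ) 1, ‖φ t‖ ≤ κ * ‖x‖ ^ 2 / 2 * t ^ 2 := by
    intro t ht
    refine image_norm_le_of_norm_deriv_right_le_deriv_boundary hcontφ
      (fun s hs => (hderiv s (Ico_subset_Icc_self hs)).hasDerivWithinAt)
      ?_ (B := fun s => κ * ‖x‖ ^ 2 / 2 * s ^ 2) (B' := fun s => κ * ‖x‖ ^ 2 * s) ?_ ?_ ht
    · simp [hφ]
    · intro s
      have : HasDerivAt (fun u : ℝ => κ * ‖x‖ ^ 2 / 2 * u ^ 2)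
          (κ * ‖x‖ ^ 2 / 2 * (2 * s)) s := by
        simpa using (hasDerivAt_pow 2 s).const_mul (κ * ‖x‖ ^ 2 / 2)
      convert this using 1; ring
    · intro s hs
      have hs0 : 0 ≤ s := hs.1
      have hb := hlip (s • x) (hball s (Ico_subset_Icc_self hs))
      calc ‖(F' (s • x)) x - F' 0 x‖ = ‖(F' (s • x) - F' 0) x‖ := by simp
        _ ≤ ‖F' (s • x) - F' 0‖ * ‖x‖ := (F' (s • x) - F' 0).le_opNorm x
        _ ≤ κ * ‖s • x‖ * ‖x‖ := by
            exact mul_le_mul_of_nonneg_right hb (norm_nonneg x)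
        _ = κ * ‖x‖ ^ 2 * s := by
            rw [norm_smul, Real.norm_eq_abs, abs_of_nonneg hs0]; ring
  have h1 := key 1 (by norm_num)
  have : φ 1 = F x - F 0 - F' 0 x := by simp [hφ]; abel
  rw [this] at h1
  calc ‖F x - F 0 - F' 0 x‖ ≤ κ * ‖x‖ ^ 2 / 2 * 1 ^ 2 := h1
    _ = κ / 2 * ‖x‖ ^ 2 := by ring



/-- quantitative implicit function theorem. If `F` is `C¹` on
`B_r(0)` with `DF(0)` invertible (inverse `G`), `‖G(F(0))‖ ≤ A`, `‖G‖ ≤ B`,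
`‖DF(x) − DF(0)‖ ≤ κ‖x‖` on `B_r(0)`, `2κAB < 1` and `2A < r`, then `F` has
exactly one zero `x` with `‖x‖ ≤ 2A`. -/
theorem quantitative_implicit_function_theorem
    {X Y : Type*}
    [NormedAddCommGroup X] [NormedSpace ℝ X] [CompleteSpace X]
    [NormedAddCommGroup Y] [NormedSpace ℝ Y] [CompleteSpace Y]
    (r A B κ : ℝ) (hr : 0 < r) (hA : 0 ≤ A) (hB : 0 ≤ B) (hκ : 0 ≤ κ)
    (F : X → Y) (F' : X → X →L[ℝ] Y)
    (hdiff : ∀ x ∈ Metric.ball (0 : X) r, HasFDerivAt F (F' x) x)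
    (hcont : ContinuousOn F' (Metric.ball (0 : X) r))
    (G : Y →L[ℝ] X)
    (hGleft : ∀ x : X, G ((F' 0) x) = x)
    (hGright : ∀ y : Y, (F' 0) (G y) = y)
    (hGF0 : ‖G (F 0)‖ ≤ A)
    (hGnorm : ‖G‖ ≤ B)
    (hlip : ∀ x ∈ Metric.ball (0 : X) r, ‖F' x - F' 0‖ ≤ κ * ‖x‖)
    (hsmall : 2 * κ * A * B < 1)
    (hrad : 2 * A < r) :
    ∃! x : X, ‖x‖ ≤ 2 * A ∧ F x = 0 := by
  set T : X → X := fun x => x - G (F x) with hT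
  set s : Set X := Metric.closedBall (0 : X) (2 * A) with hs
  have hsub : s ⊆ Metric.ball (0 : X) r := by
    intro x hx
    simp only [hs, Metric.mem_closedBall, dist_zero_right] at hx
    simp only [Metric.mem_ball, dist_zero_right]
    linarith
  -- key identity
  have hTid : ∀ x y : X, T x - T y = G (F' 0 (x - y) - (F x - F y)) := by
    intro x y
    simp only [hT, map_sub, hGleft]
    abel
  -- zeros of F ↔ fixed points of T (within domain)
  have hfix : ∀ x : X, F x = 0 → T x = x := by
    intro x hx; simp [hT, hx]
  have hfix' : ∀ x : X, T x = x → F x = 0 := by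
    intro x hx
    have h1 : x - G (F x) = x := hx
    have : G (F x) = 0 := sub_eq_self.mp h1
    have h2 := hGright (F x)
    rw [this] at h2
    simpa using h2.symm
  -- contraction estimate on s
  have hcontr : ∀ x ∈ s, ∀ y ∈ s, ‖T x - T y‖ ≤ (2 * κ * A * B) * ‖x - y‖ := by
    intro x hx y hy
    have hconv : Convex ℝ s := convex_closedBall _ _
    -- derivative of g := F - F'0 on s
    have hg : ∀ z ∈ s, HasFDerivWithinAt (fun z => F z - F' 0 z) (F' z - F' 0) s z := by
      intro z hz
      exact ((hdiff z (hsub hz)).sub (F' 0).hasFDerivAt).hasFDerivWithinAt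
    have hbound : ∀ z ∈ s, ‖F' z - F' 0‖ ≤ κ * (2 * A) := by
      intro z hz
      refine (hlip z (hsub hz)).trans ?_
      have : ‖z‖ ≤ 2 * A := by
        simpa [hs, dist_zero_right] using hz
      exact mul_le_mul_of_nonneg_left this hκ
    have hmv := hconv.norm_image_sub_le_of_norm_hasFDerivWithin_le hg hbound hy hx
    have hGx : ‖T x - T y‖ ≤ ‖G‖ * ‖F' 0 (x - y) - (F x - F y)‖ := by
      rw [hTid x y]; exact G.le_opNorm _
    have heq : ‖F' 0 (x - y) - (F x - F y)‖
        = ‖(fun z => F z - F' 0 z) x - (fun z => F z - F' 0 z) y‖ := by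
      rw [← norm_neg]
      congr 1
      simp only [map_sub]
      abel
    calc ‖T x - T y‖ ≤ ‖G‖ * ‖F' 0 (x - y) - (F x - F y)‖ := hGx
      _ = ‖G‖ * ‖(fun z => F z - F' 0 z) x - (fun z => F z - F' 0 z) y‖ := by rw [heq]
      _ ≤ B * (κ * (2 * A) * ‖x - y‖) := by
          apply mul_le_mul hGnorm hmv (norm_nonneg _) hB
      _ = (2 * κ * A * B) * ‖x - y‖ := by ring
  -- T maps s into itself
  have hmaps : Set.MapsTo T s s := by
    intro x hx
    have hxn : ‖x‖ ≤ 2 * A := by simpa [hs, dist_zero_right] using hx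
    have hxr : ‖x‖ < r := lt_of_le_of_lt hxn hrad
    have htay := half_taylor_aux r κ hκ F F' hdiff hlip x hxr
    have hT0 : ‖T 0 - T x‖ ≤ B * (κ / 2 * ‖x‖ ^ 2) := by
      calc ‖T 0 - T x‖ = ‖G (F' 0 (0 - x) - (F 0 - F x))‖ := by rw [hTid]
        _ ≤ ‖G‖ * ‖F' 0 (0 - x) - (F 0 - F x)‖ := G.le_opNorm _
        _ = ‖G‖ * ‖F x - F 0 - F' 0 x‖ := by
            congr 1
            congr 1
            simp only [zero_sub, map_neg]
            abel
        _ ≤ B * (κ / 2 * ‖x‖ ^ 2) := by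
            apply mul_le_mul hGnorm htay (norm_nonneg _) hB
    have hT0n : ‖T 0‖ ≤ A := by simpa [hT] using hGF0
    have hTx : ‖T x‖ ≤ A + B * (κ / 2 * ‖x‖ ^ 2) := by
      calc ‖T x‖ = ‖T 0 - (T 0 - T x)‖ := by rw [sub_sub_cancel]
        _ ≤ ‖T 0‖ + ‖T 0 - T x‖ := norm_sub_le _ _
        _ ≤ A + B * (κ / 2 * ‖x‖ ^ 2) := add_le_add hT0n hT0
    have hx2 : ‖x‖ ^ 2 ≤ (2 * A) ^ 2 := by
      apply sq_le_sq' _ hxn; linarith [norm_nonneg x]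
    simp only [hs, Metric.mem_closedBall, dist_zero_right]
    have : B * (κ / 2 * ‖x‖ ^ 2) ≤ B * (κ / 2 * (2 * A) ^ 2) := by
      apply mul_le_mul_of_nonneg_left _ hB
      apply mul_le_mul_of_nonneg_left hx2 (by linarith)
    nlinarith [hTx]
  -- contraction constant as NNReal
  set K : NNReal := Real.toNNReal (2 * κ * A * B) with hK
  have hK1 : K < 1 := by
    rw [hK, ← Real.toNNReal_one]
    exact (Real.toNNReal_lt_toNNReal_iff_of_nonneg (by positivity)).mpr hsmall
  have hKc : (K : ℝ) = 2 * κ * A * B := Real.coe_toNNReal _ (by positivity)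
  have hcw : ContractingWith K (hmaps.restrict T s s) := by
    constructor
    · exact hK1
    · apply LipschitzWith.of_dist_le_mul
      rintro ⟨x, hx⟩ ⟨y, hy⟩
      simp only [Set.MapsTo.restrict, Subtype.dist_eq, Subtype.map, dist_eq_norm]
      rw [hKc]
      exact hcontr x hx y hy
  have hcs : IsComplete s := (Metric.isClosed_closedBall).isComplete
  have h0s : (0 : X) ∈ s := by
    simp [hs]; positivity
  obtain ⟨z, hzs, hzfix, -, -⟩ :=
    ContractingWith.exists_fixedPoint' hcs hmaps hcw h0s (edist_ne_top _ _)
  refine ⟨z, ⟨by simpa [hs, dist_zero_right] using hzs, hfix' z hzfix⟩, ?_⟩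
  rintro w ⟨hwn, hwF⟩
  have hws : w ∈ s := by simpa [hs, dist_zero_right] using hwn
  have hwfix : T w = w := hfix w hwF
  have h := hcontr w hws z hzs
  rw [hwfix, hzfix.eq] at h
  by_contra hne
  have hpos : 0 < ‖w - z‖ := by
    rw [norm_pos_iff, sub_ne_zero]; exact hne
  nlinarith
end
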